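/- Let Γ' be a finite simple 3-connected graph and let Γ be its cycle expansion. Then Γ is 3-connected. -/

import Mathlib

set_option linter.unusedSectionVars false
set_option maxHeartbeats 1000000


open SimpleGraph

/-- The cycle expansion of a simple graph `G'` determined by a rotation permutation `σ`
on the darts of `G'`: each vertex is replaced by a cycle through its darts. Vertices of
the expansion are darts of `G'`; the original (painted) edges join a dart to its
reverse, and the new edges join consecutive darts in the cyclic order `σ` around each
vertex. -/
def cycleExpansion {V' : Type*} (G' : SimpleGraph V') (σ : Equiv.Perm G'.Dart) :
    SimpleGraph G'.Dart where
  Adj d d' := d' = d.symm ∨ (d ≠ d' ∧ d.toProd.1 = d'.toProd.1 ∧ (σ d = d' ∨ σ d' = d))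
  symm := by
    constructor
    intro d d' h
    rcases h with h | ⟨hne, hfst, hor⟩
    · left; rw [h, SimpleGraph.Dart.symm_symm]
    · right; exact ⟨hne.symm, hfst.symm, hor.symm⟩
  loopless := by
    constructor
    intro d h
    rcases h with h | ⟨hne, _⟩
    · exact (SimpleGraph.Dart.symm_ne d) h.symm
    · exact hne rfl

/-- `σ` is a valid rotation for the cycle expansion: it preserves the source vertex of
darts and acts as a single cycle on the darts at each vertex (so that each vertex of
degree `n` is replaced by an `n`-cycle attached bijectively to its incident edges). -/
def IsRotation {V' : Type*} (G' : SimpleGraph V') (σ : Equiv.Perm G'.Dart) : Prop :=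
  (∀ d, (σ d).toProd.1 = d.toProd.1) ∧
    ∀ d d' : G'.Dart, d.toProd.1 = d'.toProd.1 → ∃ n : ℕ, (σ ^ n) d = d'

/-- A graph is 3-connected: it has more than 3 vertices, and removing any set of at
most two vertices leaves it connected. -/
def ThreeConnected {V : Type*} [Fintype V] (G : SimpleGraph V) : Prop :=
  3 < Fintype.card V ∧
    ∀ S : Finset V, S.card ≤ 2 → ((G.induce ((↑S : Set V)ᶜ)).Connected)

namespace CEaux

variable {V' : Type*} [Fintype V'] [DecidableEq V'] {G' : SimpleGraph V'} [DecidableRel G'.Adj]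
  {σ : Equiv.Perm G'.Dart} {S : Finset G'.Dart}

lemma memc {α : Type*} {T : Finset α} {x : α} (h : x ∉ T) : x ∈ ((↑T : Set α)ᶜ) := by
  simpa using h

lemma src_pow (hσ : IsRotation G' σ) (n : ℕ) (d : G'.Dart) :
    ((σ ^ n) d).toProd.1 = d.toProd.1 := by
  induction n with
  | zero => simp
  | succ n ih =>
    rw [pow_succ', Equiv.Perm.mul_apply, hσ.1 ((σ ^ n) d), ih]

lemma fixfree (hσ : IsRotation G' σ) (hdeg : ∀ v : V', 3 ≤ G'.degree v)
    (d : G'.Dart) : σ d ≠ d := by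
  intro h
  have hcard : 1 < (G'.neighborFinset d.toProd.1).card := by
    rw [SimpleGraph.card_neighborFinset_eq_degree]
    have := hdeg d.toProd.1; omega
  obtain ⟨u, hu, hune⟩ := Finset.exists_mem_ne hcard d.toProd.2
  have hadj : G'.Adj d.toProd.1 u := by rwa [← SimpleGraph.mem_neighborFinset]
  set d' : G'.Dart := ⟨(d.toProd.1, u), hadj⟩ with hd'
  obtain ⟨n, hn⟩ := hσ.2 d d' rfl
  have hfix : ∀ m : ℕ, (σ ^ m) d = d := by
    intro m
    induction m with
    | zero => simp
    | succ m ih => rw [pow_succ, Equiv.Perm.mul_apply, h, ih]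
  rw [hfix n] at hn
  have : d.toProd.2 = u := congrArg (fun x => x.toProd.2) hn
  exact hune this.symm

lemma adj_sigma (hσ : IsRotation G' σ) (hdeg : ∀ v : V', 3 ≤ G'.degree v)
    (d : G'.Dart) : (cycleExpansion G' σ).Adj d (σ d) :=
  Or.inr ⟨Ne.symm (fixfree hσ hdeg d), (hσ.1 d).symm, Or.inl rfl⟩

lemma adj_painted (d : G'.Dart) : (cycleExpansion G' σ).Adj d d.symm := Or.inl rfl

lemma ind_adj {a b : G'.Dart} (ha : a ∈ ((↑S : Set G'.Dart)ᶜ)) (hb : b ∈ ((↑S : Set G'.Dart)ᶜ))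
    (h : (cycleExpansion G' σ).Adj a b) :
    ((cycleExpansion G' σ).induce ((↑S : Set G'.Dart)ᶜ)).Adj ⟨a, ha⟩ ⟨b, hb⟩ := by
  simpa using h

lemma reach_of_eq {G : SimpleGraph (G'.Dart)} {T : Set G'.Dart} {a b c : ↥T}
    (h : b.val = c.val) (hr : (G.induce T).Reachable a b) : (G.induce T).Reachable a c := by
  have : b = c := Subtype.ext h
  rwa [this] at hr

lemma reach_chain (hσ : IsRotation G' σ) (hdeg : ∀ v : V', 3 ≤ G'.degree v)
    (d : G'.Dart) (n : ℕ) (h : ∀ i ≤ n, (σ ^ i) d ∉ S)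
    (h0 : d ∈ ((↑S : Set G'.Dart)ᶜ)) (hn : (σ ^ n) d ∈ ((↑S : Set G'.Dart)ᶜ)) :
    ((cycleExpansion G' σ).induce ((↑S : Set G'.Dart)ᶜ)).Reachable ⟨d, h0⟩ ⟨(σ ^ n) d, hn⟩ := by
  induction n with
  | zero =>
    apply reach_of_eq (b := ⟨d, h0⟩)
    · simp
    · exact Reachable.refl _
  | succ n ih =>
    have hmem : (σ ^ n) d ∉ S := h n (Nat.le_succ n)
    have r1 := ih (fun i hi => h i (hi.trans (Nat.le_succ n))) (memc hmem)
    refine r1.trans (SimpleGraph.Adj.reachable ?_)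
    apply ind_adj
    have he : (σ ^ (n + 1)) d = σ ((σ ^ n) d) := by
      rw [pow_succ', Equiv.Perm.mul_apply]
    rw [he]
    exact adj_sigma hσ hdeg _

lemma reach_samesrc (hσ : IsRotation G' σ) (hdeg : ∀ v : V', 3 ≤ G'.degree v)
    {d d' : G'.Dart}
    (hS1 : ∀ r ∈ S, ∀ r' ∈ S, r.toProd.1 = d.toProd.1 → r'.toProd.1 = d.toProd.1 → r = r')
    (hd : d ∉ S) (hd' : d' ∉ S) (hsrc : d.toProd.1 = d'.toProd.1) :
    ((cycleExpansion G' σ).induce ((↑S : Set G'.Dart)ᶜ)).Reachable ⟨d, memc hd⟩ ⟨d', memc hd'⟩ := by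
  obtain ⟨n₀, hn₀⟩ := hσ.2 d d' hsrc
  set m := Function.minimalPeriod (⇑σ) d with hmdef
  have hper : Function.IsPeriodicPt (⇑σ) (orderOf σ) d := by
    show (⇑σ)^[orderOf σ] d = d
    rw [Equiv.Perm.iterate_eq_pow, pow_orderOf_eq_one]
    rfl
  have hm : 0 < m := hper.minimalPeriod_pos (orderOf_pos σ)
  have hmper : (σ ^ m) d = d := Function.isPeriodicPt_minimalPeriod (⇑σ) d
  set n := n₀ % m with hndef
  have hn : (σ ^ n) d = d' :=
    (Function.iterate_mod_minimalPeriod_eq (f := ⇑σ) (x := d) (n := n₀)).trans hn₀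
  have hnm : n < m := Nat.mod_lt _ hm
  by_cases hfwd : ∀ i ≤ n, (σ ^ i) d ∉ S
  · exact reach_of_eq hn (reach_chain hσ hdeg d n hfwd (memc hd) (memc (by rw [hn]; exact hd')))
  · push_neg at hfwd
    obtain ⟨i, hile, hiS⟩ := hfwd
    have hi0 : i ≠ 0 := by rintro rfl; simp at hiS; exact hd hiS
    have hin : i ≠ n := by rintro rfl; rw [hn] at hiS; exact hd' hiS
    have hilt : i < n := lt_of_le_of_ne hile hin
    have key : ∀ k ≤ m - n, (σ ^ k) d' ∉ S := by
      intro k hk hkS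
      have hkn : k + n ≤ m := by omega
      have heq : (σ ^ (k + n)) d = (σ ^ k) d' := by
        rw [pow_add, Equiv.Perm.mul_apply, hn]
      have hsame : (σ ^ k) d' = (σ ^ i) d := by
        apply hS1 _ hkS _ hiS
        · rw [src_pow hσ, ← hsrc]
        · rw [src_pow hσ]
      rcases lt_or_eq_of_le hkn with hlt | he
      · have hinj := Function.iterate_injOn_Iio_minimalPeriod (f := ⇑σ) (x := d)
        have : k + n = i := by
          apply hinj (Set.mem_Iio.mpr hlt) (Set.mem_Iio.mpr (hilt.trans hnm))
          show (⇑σ)^[k+n] d = (⇑σ)^[i] d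
          rw [Equiv.Perm.iterate_eq_pow, Equiv.Perm.iterate_eq_pow, heq, hsame]
        omega
      · rw [he, hmper] at heq
        exact hd (by rw [heq, hsame]; exact hiS)
    have hend : (σ ^ (m - n)) d' = d := by
      rw [← hn, ← Equiv.Perm.mul_apply, ← pow_add, Nat.sub_add_cancel hnm.le, hmper]
    exact (reach_of_eq hend (reach_chain hσ hdeg d' (m - n) key (memc hd')
      (memc (by rw [hend]; exact hd)))).symm


lemma notmem_S {d : G'.Dart} (h : d.toProd.1 ∉ S.image (fun r => r.toProd.1)) : d ∉ S :=
  fun hd => h (Finset.mem_image_of_mem _ hd)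

lemma reach_cross_aux (hσ : IsRotation G' σ) (hdeg : ∀ v : V', 3 ≤ G'.degree v)
    {u w : ↥((↑(S.image (fun r => r.toProd.1)) : Set V')ᶜ)}
    (p : (G'.induce ((↑(S.image (fun r => r.toProd.1)) : Set V')ᶜ)).Walk u w) :
    ∀ (d d' : G'.Dart) (hd : d ∉ S) (hd' : d' ∉ S),
      d.toProd.1 = u.val → d'.toProd.1 = w.val →
      ((cycleExpansion G' σ).induce ((↑S : Set G'.Dart)ᶜ)).Reachable
        ⟨d, memc hd⟩ ⟨d', memc hd'⟩ := by
  induction p with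
  | @nil x =>
    intro d d' hd hd' hu hw
    have hxA : x.val ∉ S.image (fun t => t.toProd.1) := by simpa using x.prop
    refine reach_samesrc hσ hdeg ?_ hd hd' (hu.trans hw.symm)
    intro r hr r' hr' hsrc _
    exfalso
    have hmem : r.toProd.1 ∈ S.image (fun t => t.toProd.1) := Finset.mem_image_of_mem _ hr
    rw [hsrc, hu] at hmem
    exact hxA hmem
  | @cons a b c hadj p ih =>
    intro d d' hd hd' hu hw
    have haA : a.val ∉ S.image (fun t => t.toProd.1) := by simpa using a.prop
    have hbA : b.val ∉ S.image (fun t => t.toProd.1) := by simpa using b.prop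
    have hadj' : G'.Adj a.val b.val := hadj
    set e : G'.Dart := ⟨(a.val, b.val), hadj'⟩ with hedef
    have heS : e ∉ S := notmem_S haA
    have heS' : e.symm ∉ S := notmem_S hbA
    have r1 : ((cycleExpansion G' σ).induce ((↑S : Set G'.Dart)ᶜ)).Reachable
        ⟨d, memc hd⟩ ⟨e, memc heS⟩ := by
      refine reach_samesrc hσ hdeg ?_ hd heS hu
      intro r hr r' hr' hsrc _
      exfalso
      have hmem : r.toProd.1 ∈ S.image (fun t => t.toProd.1) := Finset.mem_image_of_mem _ hr
      rw [hsrc, hu] at hmem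
      exact haA hmem
    have r2 : ((cycleExpansion G' σ).induce ((↑S : Set G'.Dart)ᶜ)).Reachable
        ⟨e, memc heS⟩ ⟨e.symm, memc heS'⟩ :=
      (ind_adj _ _ (adj_painted e)).reachable
    exact r1.trans (r2.trans (ih e.symm d' heS' hd' rfl hw))

lemma reach_to_outside (hσ : IsRotation G' σ) (hdeg : ∀ v : V', 3 ≤ G'.degree v)
    (hS : S.card ≤ 2) {d : G'.Dart} (hd : d ∉ S) :
    ∃ (e : G'.Dart) (he : e ∉ S), e.toProd.1 ∉ S.image (fun r => r.toProd.1) ∧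
      ((cycleExpansion G' σ).induce ((↑S : Set G'.Dart)ᶜ)).Reachable
        ⟨d, memc hd⟩ ⟨e, memc he⟩ := by
  set A := S.image (fun r => r.toProd.1) with hA
  by_cases hdA : d.toProd.1 ∈ A
  · by_cases htwo : ∃ r ∈ S, ∃ s ∈ S, r ≠ s ∧ r.toProd.1 = d.toProd.1 ∧ s.toProd.1 = d.toProd.1
    · obtain ⟨r, hr, s, hs, hrs, hr1, hs1⟩ := htwo
      have hsub : ({r, s} : Finset G'.Dart) ⊆ S := by
        intro x hx
        rcases Finset.mem_insert.mp hx with rfl | hx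
        · exact hr
        · rw [Finset.mem_singleton] at hx; subst hx; exact hs
      have hSset : S = {r, s} :=
        (Finset.eq_of_subset_of_card_le hsub (by rw [Finset.card_pair hrs]; exact hS)).symm
      have hall : ∀ t ∈ S, t.toProd.1 = d.toProd.1 := by
        intro t ht
        rw [hSset] at ht
        rcases Finset.mem_insert.mp ht with rfl | ht
        · exact hr1
        · rw [Finset.mem_singleton] at ht; subst ht; exact hs1
      have h2ne1 : d.toProd.2 ≠ d.toProd.1 := (G'.ne_of_adj d.adj).symm
      have heA : d.symm.toProd.1 ∉ A := by
        intro hmem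
        rw [hA] at hmem
        obtain ⟨t, ht, hteq⟩ := Finset.mem_image.mp hmem
        rw [hall t ht] at hteq
        exact h2ne1 hteq.symm
      have heS : d.symm ∉ S := fun h => heA (Finset.mem_image_of_mem _ h)
      exact ⟨d.symm, heS, heA, (ind_adj _ _ (adj_painted d)).reachable⟩
    · push_neg at htwo
      have hS1 : ∀ r ∈ S, ∀ r' ∈ S, r.toProd.1 = d.toProd.1 → r'.toProd.1 = d.toProd.1 →
          r = r' := by
        intro r hr r' hr' h1 h2
        by_contra hne
        exact (htwo r hr r' hr' hne h1) h2
      set v := d.toProd.1 with hv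
      set F := (A.erase v) ∪ (S.filter (fun r => r.toProd.1 = v)).image (fun r => r.toProd.2)
        with hF
      have hFcard : F.card ≤ 2 := by
        have hAcard : A.card ≤ 2 := le_trans Finset.card_image_le hS
        have h1 : (A.erase v).card ≤ 1 := by
          have := Finset.card_erase_of_mem hdA
          omega
        have h2 : ((S.filter (fun r => r.toProd.1 = v)).image (fun r => r.toProd.2)).card ≤ 1 := by
          apply le_trans Finset.card_image_le
          apply Finset.card_le_one.mpr
          intro x hx y hy
          simp only [Finset.mem_filter] at hx hy
          exact hS1 x hx.1 y hy.1 hx.2 hy.2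
        calc F.card ≤ (A.erase v).card
            + ((S.filter (fun r => r.toProd.1 = v)).image (fun r => r.toProd.2)).card :=
              Finset.card_union_le _ _
          _ ≤ 2 := by omega
      have hNcard : 3 ≤ (G'.neighborFinset v).card := by
        rw [SimpleGraph.card_neighborFinset_eq_degree]; exact hdeg v
      have hpos : 0 < ((G'.neighborFinset v) \ F).card := by
        have := Finset.le_card_sdiff F (G'.neighborFinset v)
        omega
      obtain ⟨u, hu⟩ := Finset.card_pos.mp hpos
      have huN : u ∈ G'.neighborFinset v := (Finset.mem_sdiff.mp hu).1
      have huF : u ∉ F := (Finset.mem_sdiff.mp hu).2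
      have hadj : G'.Adj v u := by rwa [← SimpleGraph.mem_neighborFinset]
      set e : G'.Dart := ⟨(v, u), hadj⟩ with hedef
      have heS : e ∉ S := by
        intro hm
        apply huF
        rw [hF]
        apply Finset.mem_union_right
        have hef : e ∈ S.filter (fun r => r.toProd.1 = v) := Finset.mem_filter.mpr ⟨hm, rfl⟩
        exact Finset.mem_image_of_mem (fun r => r.toProd.2) hef
      have huA : u ∉ A := by
        intro hm
        apply huF
        rw [hF]
        apply Finset.mem_union_left
        exact Finset.mem_erase.mpr ⟨(G'.ne_of_adj hadj).symm, hm⟩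
      have heAs : e.symm.toProd.1 ∉ A := huA
      have heSs : e.symm ∉ S := fun h => heAs (Finset.mem_image_of_mem _ h)
      refine ⟨e.symm, heSs, heAs, ?_⟩
      have r1 := reach_samesrc hσ hdeg hS1 hd heS rfl
      exact r1.trans (ind_adj _ _ (adj_painted e)).reachable
  · exact ⟨d, hd, hdA, Reachable.refl _⟩

end CEaux

/-- The cycle expansion of a finite simple 3-connected graph is
3-connected. -/
theorem cycleExpansion_threeConnected {V' : Type*} [Fintype V'] [DecidableEq V']
    (G' : SimpleGraph V') [DecidableRel G'.Adj]
    (hconn : ThreeConnected G')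
    (hdeg : ∀ v : V', 3 ≤ G'.degree v)
    (σ : Equiv.Perm G'.Dart) (hσ : IsRotation G' σ) :
    ThreeConnected (cycleExpansion G' σ) := by
  classical
  have hsum : Fintype.card V' * 3 ≤ ∑ v : V', G'.degree v := by
    have := Finset.card_nsmul_le_sum (s := (Finset.univ : Finset V'))
      (f := fun v => G'.degree v) (n := 3) (fun v _ => hdeg v)
    simpa [Finset.card_univ, smul_eq_mul] using this
  have hcardD : 12 ≤ Fintype.card G'.Dart := by
    rw [SimpleGraph.dart_card_eq_sum_degrees]
    have h4 : 3 < Fintype.card V' := hconn.1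
    omega
  constructor
  · omega
  · intro S hS
    have hA : (S.image (fun r => r.toProd.1)).card ≤ 2 := le_trans Finset.card_image_le hS
    have hc := hconn.2 _ hA
    rw [SimpleGraph.connected_iff]
    have hnonfull : ∃ d : G'.Dart, d ∉ S := by
      by_contra h
      push_neg at h
      have : Fintype.card G'.Dart ≤ S.card := by
        rw [← Finset.card_univ]
        exact Finset.card_le_card (fun x _ => h x)
      omega
    constructor
    · rintro ⟨d, hd⟩ ⟨d', hd'⟩
      have hdS : d ∉ S := by simpa using hd
      have hdS' : d' ∉ S := by simpa using hd'
      obtain ⟨e, he, heA, r1⟩ := CEaux.reach_to_outside hσ hdeg hS hdS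
      obtain ⟨e', he', heA', r2⟩ := CEaux.reach_to_outside hσ hdeg hS hdS'
      obtain ⟨p⟩ := hc.preconnected ⟨e.toProd.1, CEaux.memc heA⟩ ⟨e'.toProd.1, CEaux.memc heA'⟩
      have r3 := CEaux.reach_cross_aux hσ hdeg p e e' he he' rfl rfl
      exact r1.trans (r3.trans r2.symm)
    · exact ⟨⟨hnonfull.choose, CEaux.memc hnonfull.choose_spec⟩⟩
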